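/- Let m, n ≥ 0, let (i_0,…,i_m) ∈ ω_m and (j_0,…,j_n) ∈ ω_n, and let (k_0,…,k_{m+n+1}) be a permutation of the tuple (i_0,…,i_m, j_0+m+1,…,j_n+m+1). Then the weight subgraph G(k_0,…,k_{m+n+1}) of G_{m+n+1} is isomorphic as a graph to the box product of G(i_0,…,i_m) and G(j_0,…,j_n), i.e., the graph on pairs (x,y) with x of weight (i_0,…,i_m) in G_m and y of weight (j_0,…,j_n) in G_n, where (x,y) is adjacent to (x',y') iff either y = y' and x is adjacent to x' in G_m, or x = x' and y is adjacent to y' in G_n. In particular, the number of arrays in G_{m+n+1} of weight (k_0,…,k_{m+n+1}) equals the number of arrays in G_m of weight (i_0,…,i_m) times the number of arrays in G_n of weight (j_0,…,j_n). -/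

import Mathlib

/-- `UT n`: strictly upper triangular 0-1 arrays `(a_{i,j})_{0 ≤ i < j ≤ n}`,
encoded as functions on `Fin (n+1) × Fin (n+1)` vanishing off the region `i < j`. -/
def UT (n : ℕ) : Type :=
  {a : Fin (n + 1) → Fin (n + 1) → ℤ //
    ∀ i j : Fin (n + 1), (i < j → a i j = 0 ∨ a i j = 1) ∧ (¬ i < j → a i j = 0)}

/-- Adjacency in `G_n`: `a` and `b` differ exactly on a triple of positions
`(i,j), (j,l), (i,l)` with `i < j < l`, where one of them has entries `1, 1, 0` and
the other `0, 0, 1`. -/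
def UTAdj {n : ℕ} (a b : UT n) : Prop :=
  ∃ i j l : Fin (n + 1), i < j ∧ j < l ∧
    ((a.1 i j = 1 ∧ a.1 j l = 1 ∧ a.1 i l = 0 ∧
        b.1 i j = 0 ∧ b.1 j l = 0 ∧ b.1 i l = 1) ∨
      (b.1 i j = 1 ∧ b.1 j l = 1 ∧ b.1 i l = 0 ∧
        a.1 i j = 0 ∧ a.1 j l = 0 ∧ a.1 i l = 1)) ∧
    ∀ s t : Fin (n + 1),
      ¬ ((s = i ∧ t = j) ∨ (s = j ∧ t = l) ∨ (s = i ∧ t = l)) → a.1 s t = b.1 s t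

/-- The weight of an array: `w_s(a) = ∑_{k<s} (1 - a_{k,s}) + ∑_{k>s} a_{s,k}`. -/
def UTweight {n : ℕ} (a : UT n) : Fin (n + 1) → ℤ := fun s =>
  (∑ k : Fin (n + 1), if k < s then 1 - a.1 k s else 0) +
    ∑ k : Fin (n + 1), if s < k then a.1 s k else 0

/-- Membership in `ω_n`: the tuple sums to `0 + 1 + ⋯ + n` and every subset of the
entries sums to at least `0 + 1 + ⋯ + (s-1)` where `s` is the size of the subset. -/
def InOmega {n : ℕ} (c : Fin (n + 1) → ℤ) : Prop :=
  (∑ k : Fin (n + 1), c k = ∑ k : Fin (n + 1), (k : ℤ)) ∧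
    ∀ s : Finset (Fin (n + 1)), (∑ t ∈ Finset.range s.card, (t : ℤ)) ≤ ∑ k ∈ s, c k

set_option linter.unusedVariables false
set_option linter.unusedTactic false
set_option linter.unusedSectionVars false

namespace WSP

/-- `bt a x y = 1` iff `x` beats `y` in the tournament `a`. -/
def bt {n : ℕ} (a : UT n) (x y : Fin (n + 1)) : ℤ :=
  if x < y then a.1 x y else if y < x then 1 - a.1 y x else 0

lemma bt_self {n : ℕ} (a : UT n) (x : Fin (n + 1)) : bt a x x = 0 := by
  simp [bt]

lemma bt_mem {n : ℕ} (a : UT n) (x y : Fin (n + 1)) : bt a x y = 0 ∨ bt a x y = 1 := by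
  unfold bt
  split_ifs with h1 h2
  · exact (a.2 x y).1 h1
  · rcases (a.2 y x).1 h2 with h | h <;> simp [h]
  · exact Or.inl rfl

lemma bt_rev {n : ℕ} (a : UT n) {x y : Fin (n + 1)} (h : x ≠ y) :
    bt a y x = 1 - bt a x y := by
  rcases lt_trichotomy x y with hl | he | hl
  · simp [bt, hl, asymm hl]
  · exact absurd he h
  · simp [bt, hl, asymm hl]

lemma bt_nonneg {n : ℕ} (a : UT n) (x y : Fin (n + 1)) : 0 ≤ bt a x y := by
  rcases bt_mem a x y with h | h <;> simp [h]

lemma bt_le_one {n : ℕ} (a : UT n) (x y : Fin (n + 1)) : bt a x y ≤ 1 := by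
  rcases bt_mem a x y with h | h <;> simp [h]

lemma apply_of_lt {n : ℕ} (a : UT n) {x y : Fin (n + 1)} (h : x < y) :
    a.1 x y = bt a x y := by simp [bt, h]

lemma UTweight_eq_sum_bt {n : ℕ} (a : UT n) (s : Fin (n + 1)) :
    UTweight a s = ∑ y : Fin (n + 1), bt a s y := by
  unfold UTweight
  rw [← Finset.sum_add_distrib]
  refine Finset.sum_congr rfl fun y _ => ?_
  rcases lt_trichotomy y s with hl | he | hl
  · simp [bt, hl, asymm hl]
  · subst he; simp [bt]
  · simp [bt, hl, asymm hl]

lemma UT_ext_bt {n : ℕ} {a b : UT n} (h : ∀ x y, bt a x y = bt b x y) : a = b := by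
  apply Subtype.ext; funext x y
  by_cases hxy : x < y
  · have := h x y; rwa [apply_of_lt a hxy, apply_of_lt b hxy]
  · rw [(a.2 x y).2 hxy, (b.2 x y).2 hxy]

/-- sum of bt over all ordered pairs from an injective family equals the triangular
number. -/
lemma sum_bt_pairs {n : ℕ} (a : UT n) {β : Type*} [Fintype β] [DecidableEq β]
    (f : β → Fin (n + 1)) (hf : Function.Injective f) :
    2 * ∑ x : β, ∑ y : β, bt a (f x) (f y) =
      (Fintype.card β : ℤ) * ((Fintype.card β : ℤ) - 1) := by
  have hpt : ∀ x y : β, bt a (f x) (f y) + bt a (f y) (f x) = if x = y then 0 else 1 := by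
    intro x y
    by_cases h : x = y
    · subst h; simp [bt_self]
    · rw [bt_rev a (fun he => h (hf he)), if_neg h]; ring
  have hS : (∑ x : β, ∑ y : β, bt a (f x) (f y))
      = ∑ x : β, ∑ y : β, bt a (f y) (f x) := Finset.sum_comm
  have h2 : 2 * (∑ x : β, ∑ y : β, bt a (f x) (f y))
      = ∑ x : β, ∑ y : β, (if x = y then (0:ℤ) else 1) := by
    rw [two_mul]
    nth_rewrite 2 [hS]
    rw [← Finset.sum_add_distrib]
    refine Finset.sum_congr rfl fun x _ => ?_
    rw [← Finset.sum_add_distrib]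
    exact Finset.sum_congr rfl fun y _ => hpt x y
  rw [h2]
  have h3 : ∀ x : β, ∑ y : β, (if x = y then (0:ℤ) else 1) = (Fintype.card β : ℤ) - 1 := by
    intro x
    have hpt2 : ∀ y : β, (if x = y then (0:ℤ) else 1) = 1 - (if x = y then 1 else 0) := by
      intro y; by_cases h : x = y <;> simp [h]
    rw [Finset.sum_congr rfl (fun y _ => hpt2 y), Finset.sum_sub_distrib]
    rw [Finset.sum_ite_eq Finset.univ x (fun _ => (1:ℤ))]
    simp [Finset.card_univ]
  rw [Finset.sum_congr rfl (fun x _ => h3 x)]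
  simp [Finset.card_univ, mul_comm]
  ring

lemma two_mul_sum_fin (n : ℕ) : 2 * ∑ v : Fin (n + 1), (v : ℤ) = (n + 1) * n := by
  induction n with
  | zero => simp
  | succ p ih =>
      rw [Fin.sum_univ_castSucc]
      simp only [Fin.coe_castSucc]
      push_cast
      push_cast at ih
      linarith

section AdjChar

variable {N : ℕ}

/-- The triple `p → q → r → p` is a directed 3-cycle in `a`, reversed in `b`. -/
def Cyc (a b : UT N) (p q r : Fin (N + 1)) : Prop :=
  bt a p q = 1 ∧ bt a q r = 1 ∧ bt a r p = 1 ∧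
    bt b p q = 0 ∧ bt b q r = 0 ∧ bt b r p = 0

/-- `a` and `b` agree on all pairs not inside the triple. -/
def Agr (a b : UT N) (p q r : Fin (N + 1)) : Prop :=
  ∀ s t : Fin (N + 1), (s ∉ ({p, q, r} : Finset (Fin (N + 1))) ∨
    t ∉ ({p, q, r} : Finset (Fin (N + 1)))) → bt a s t = bt b s t

/-- order-free characterization of adjacency. -/
def Adj' (a b : UT N) : Prop :=
  ∃ p q r, p ≠ q ∧ q ≠ r ∧ r ≠ p ∧ Cyc a b p q r ∧ Agr a b p q r

lemma cyc_rot {a b : UT N} {p q r} (h : Cyc a b p q r) : Cyc a b q r p :=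
  ⟨h.2.1, h.2.2.1, h.1, h.2.2.2.2.1, h.2.2.2.2.2, h.2.2.2.1⟩

lemma agr_rot {a b : UT N} {p q r} (h : Agr a b p q r) : Agr a b q r p := by
  intro s t hst
  apply h s t
  have : ({q, r, p} : Finset (Fin (N + 1))) = {p, q, r} := by
    ext x; simp; tauto
  rwa [this] at hst

lemma cyc_swap {a b : UT N} {p q r} (hpq : p ≠ q) (hqr : q ≠ r) (hrp : r ≠ p)
    (h : Cyc a b p q r) : Cyc b a p r q := by
  obtain ⟨h1, h2, h3, h4, h5, h6⟩ := h
  refine ⟨?_, ?_, ?_, ?_, ?_, ?_⟩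
  · rw [bt_rev b hrp, h6]; norm_num
  · rw [bt_rev b hqr, h5]; norm_num
  · rw [bt_rev b hpq, h4]; norm_num
  · rw [bt_rev a hrp, h3]; norm_num
  · rw [bt_rev a hqr, h2]; norm_num
  · rw [bt_rev a hpq, h1]; norm_num

lemma agr_swap {a b : UT N} {p q r} (h : Agr a b p q r) : Agr b a p r q := by
  intro s t hst
  have : ({p, r, q} : Finset (Fin (N + 1))) = {p, q, r} := by
    ext x; simp; tauto
  rw [this] at hst
  exact (h s t hst).symm

lemma utadj_symm {a b : UT N} (h : UTAdj a b) : UTAdj b a := by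
  obtain ⟨i, j, l, hij, hjl, hor, hagr⟩ := h
  exact ⟨i, j, l, hij, hjl, hor.symm, fun s t hst => (hagr s t hst).symm⟩

lemma sorted_case {a b : UT N} {p q r} (hpq : p < q) (hqr : q < r)
    (hcyc : Cyc a b p q r) (hagr : Agr a b p q r) : UTAdj a b := by
  obtain ⟨h1, h2, h3, h4, h5, h6⟩ := hcyc
  have hpr : p < r := hpq.trans hqr
  refine ⟨p, q, r, hpq, hqr, Or.inl ⟨?_, ?_, ?_, ?_, ?_, ?_⟩, ?_⟩
  · rw [apply_of_lt a hpq]; exact h1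
  · rw [apply_of_lt a hqr]; exact h2
  · rw [apply_of_lt a hpr, bt_rev a (ne_of_lt hpr).symm] at *
    linarith [h3]
  · rw [apply_of_lt b hpq]; exact h4
  · rw [apply_of_lt b hqr]; exact h5
  · rw [apply_of_lt b hpr, bt_rev b (ne_of_lt hpr).symm] at *
    linarith [h6]
  · intro s t hst
    by_cases hsmem : s ∈ ({p, q, r} : Finset (Fin (N + 1)))
    · by_cases htmem : t ∈ ({p, q, r} : Finset (Fin (N + 1)))
      · -- both in the triple; the pair must be degenerate or excluded
        simp only [Finset.mem_insert, Finset.mem_singleton] at hsmem htmem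
        by_cases hlt : s < t
        · exfalso
          apply hst
          rcases hsmem with rfl | rfl | rfl <;> rcases htmem with rfl | rfl | rfl <;>
            first
              | exact absurd hlt (lt_irrefl _)
              | exact absurd hlt (asymm hpq)
              | exact absurd hlt (asymm hqr)
              | exact absurd hlt (asymm hpr)
              | tauto
        · by_cases heq : s = t
          · subst heq
            rw [(a.2 s s).2 (lt_irrefl s), (b.2 s s).2 (lt_irrefl s)]
          · have hts : t < s := by
              rcases lt_trichotomy s t with h | h | h
              · exact absurd h hlt
              · exact absurd h heq
              · exact h
            rw [(a.2 s t).2 (not_lt_of_gt hts), (b.2 s t).2 (not_lt_of_gt hts)]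
      · by_cases hlt : s < t
        · rw [apply_of_lt a hlt, apply_of_lt b hlt]
          exact hagr s t (Or.inr htmem)
        · rw [(a.2 s t).2 hlt, (b.2 s t).2 hlt]
    · by_cases hlt : s < t
      · rw [apply_of_lt a hlt, apply_of_lt b hlt]
        exact hagr s t (Or.inl hsmem)
      · rw [(a.2 s t).2 hlt, (b.2 s t).2 hlt]

lemma adj_of_adj' {a b : UT N} (h : Adj' a b) : UTAdj a b := by
  obtain ⟨p, q, r, hpq, hqr, hrp, hcyc, hagr⟩ := h
  rcases lt_trichotomy p q with h1 | h1 | h1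
  · rcases lt_trichotomy q r with h2 | h2 | h2
    · exact sorted_case h1 h2 hcyc hagr
    · exact absurd h2 hqr
    · -- p < q, r < q
      rcases lt_trichotomy p r with h3 | h3 | h3
      · -- p < r < q : swap to (p, r, q) in (b, a)
        exact utadj_symm (sorted_case h3 h2
          (cyc_swap hpq hqr hrp hcyc) (agr_swap hagr))
      · exact absurd h3.symm hrp
      · -- r < p < q : rotate twice to (r, p, q)
        exact sorted_case h3 h1 (cyc_rot (cyc_rot hcyc)) (agr_rot (agr_rot hagr))
  · exact absurd h1 hpq
  · -- q < p
    rcases lt_trichotomy q r with h2 | h2 | h2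
    · rcases lt_trichotomy p r with h3 | h3 | h3
      · -- q < p < r : rotate to (q, r, p), then swap to (q, p, r) in (b, a)
        exact utadj_symm (sorted_case h1 h3
          (cyc_swap hqr hrp hpq (cyc_rot hcyc))
          (agr_swap (agr_rot hagr)))
      · exact absurd h3.symm hrp
      · -- q < r < p : rotate to (q, r, p)
        exact sorted_case h2 h3 (cyc_rot hcyc) (agr_rot hagr)
    · exact absurd h2 hqr
    · -- r < q < p : swap to (r, q, p) after rotating twice: (r, p, q) swap (r, q, p)
      exact utadj_symm (sorted_case h2 h1
        (cyc_swap hrp hpq hqr (cyc_rot (cyc_rot hcyc)))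
        (agr_swap (agr_rot (agr_rot hagr))))

lemma adj'_of_adj {a b : UT N} (h : UTAdj a b) : Adj' a b := by
  obtain ⟨i, j, l, hij, hjl, hor, hagr⟩ := h
  have hil : i < l := hij.trans hjl
  have hagr' : ∀ (p q r : Fin (N + 1)), ({p, q, r} : Finset (Fin (N + 1))) = {i, j, l} →
      Agr a b p q r := by
    intro p q r hset s t hst
    rw [hset] at hst
    have hkey : ∀ s' t' : Fin (N + 1), (s' ∉ ({i, j, l} : Finset (Fin (N + 1))) ∨
        t' ∉ ({i, j, l} : Finset (Fin (N + 1)))) → a.1 s' t' = b.1 s' t' := by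
      intro s' t' hst'
      apply hagr
      simp only [Finset.mem_insert, Finset.mem_singleton] at hst'
      rintro (⟨rfl, rfl⟩ | ⟨rfl, rfl⟩ | ⟨rfl, rfl⟩) <;> tauto
    unfold bt
    split_ifs with hh1 hh2
    · exact hkey s t hst
    · rw [hkey t s (Or.symm hst)]
    · rfl
  rcases hor with ⟨h1, h2, h3, h4, h5, h6⟩ | ⟨h1, h2, h3, h4, h5, h6⟩
  · refine ⟨i, j, l, ne_of_lt hij, ne_of_lt hjl, (ne_of_lt hil).symm,
      ⟨?_, ?_, ?_, ?_, ?_, ?_⟩, hagr' i j l rfl⟩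
    · rw [← apply_of_lt a hij]; exact h1
    · rw [← apply_of_lt a hjl]; exact h2
    · rw [bt_rev a (ne_of_lt hil), ← apply_of_lt a hil, h3]; norm_num
    · rw [← apply_of_lt b hij]; exact h4
    · rw [← apply_of_lt b hjl]; exact h5
    · rw [bt_rev b (ne_of_lt hil), ← apply_of_lt b hil, h6]; norm_num
  · refine ⟨i, l, j, (ne_of_lt hil), (ne_of_lt hjl).symm, (ne_of_lt hij).symm,
      ⟨?_, ?_, ?_, ?_, ?_, ?_⟩, hagr' i l j (by ext x; simp; tauto)⟩
    · rw [← apply_of_lt a hil]; exact h6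
    · rw [bt_rev a (ne_of_lt hjl), ← apply_of_lt a hjl, h5]; norm_num
    · rw [bt_rev a (ne_of_lt hij), ← apply_of_lt a hij, h4]; norm_num
    · rw [← apply_of_lt b hil]; exact h3
    · rw [bt_rev b (ne_of_lt hjl), ← apply_of_lt b hjl, h2]; norm_num
    · rw [bt_rev b (ne_of_lt hij), ← apply_of_lt b hij, h1]; norm_num

lemma adj_iff_adj' (a b : UT N) : UTAdj a b ↔ Adj' a b :=
  ⟨adj'_of_adj, adj_of_adj'⟩

end AdjChar

section Core

variable {m n : ℕ} (E : Fin (m + 1) ⊕ Fin (n + 1) ≃ Fin (m + n + 1 + 1))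
  (i : Fin (m + 1) → ℤ) (j : Fin (n + 1) → ℤ) (k : Fin (m + n + 1 + 1) → ℤ)

/-- the "beats" matrix of the tournament glued from `b` and `c`. -/
def gfun (b : UT m) (c : UT n) (x y : Fin (m + n + 1 + 1)) : ℤ :=
  Sum.elim (fun u => Sum.elim (fun u' => bt b u u') (fun _ => 0) (E.symm y))
    (fun v => Sum.elim (fun _ => (1 : ℤ)) (fun v' => bt c v v') (E.symm y))
    (E.symm x)

lemma gfun_ll (b : UT m) (c : UT n) (u u' : Fin (m + 1)) :
    gfun E b c (E (Sum.inl u)) (E (Sum.inl u')) = bt b u u' := by simp [gfun]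

lemma gfun_rr (b : UT m) (c : UT n) (v v' : Fin (n + 1)) :
    gfun E b c (E (Sum.inr v)) (E (Sum.inr v')) = bt c v v' := by simp [gfun]

lemma gfun_lr (b : UT m) (c : UT n) (u : Fin (m + 1)) (v : Fin (n + 1)) :
    gfun E b c (E (Sum.inl u)) (E (Sum.inr v)) = 0 := by simp [gfun]

lemma gfun_rl (b : UT m) (c : UT n) (v : Fin (n + 1)) (u : Fin (m + 1)) :
    gfun E b c (E (Sum.inr v)) (E (Sum.inl u)) = 1 := by simp [gfun]

lemma gfun_mem (b : UT m) (c : UT n) (x y : Fin (m + n + 1 + 1)) :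
    gfun E b c x y = 0 ∨ gfun E b c x y = 1 := by
  obtain ⟨z, rfl⟩ : ∃ z, x = E z := ⟨E.symm x, (E.apply_symm_apply x).symm⟩
  obtain ⟨z', rfl⟩ : ∃ z', y = E z' := ⟨E.symm y, (E.apply_symm_apply y).symm⟩
  rcases z with u | v <;> rcases z' with u' | v' <;>
    simp [gfun_ll, gfun_rr, gfun_lr, gfun_rl, bt_mem]

lemma gfun_rev (b : UT m) (c : UT n) {x y : Fin (m + n + 1 + 1)} (h : x ≠ y) :
    gfun E b c y x = 1 - gfun E b c x y := by
  obtain ⟨z, rfl⟩ : ∃ z, x = E z := ⟨E.symm x, (E.apply_symm_apply x).symm⟩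
  obtain ⟨z', rfl⟩ : ∃ z', y = E z' := ⟨E.symm y, (E.apply_symm_apply y).symm⟩
  have hz : z ≠ z' := fun he => h (congrArg E he)
  rcases z with u | v <;> rcases z' with u' | v'
  · rw [gfun_ll, gfun_ll, bt_rev b (fun he => hz (congrArg Sum.inl he))]
  · rw [gfun_lr, gfun_rl]; ring
  · rw [gfun_rl, gfun_lr]; ring
  · rw [gfun_rr, gfun_rr, bt_rev c (fun he => hz (congrArg Sum.inr he))]

/-- glue two tournaments, everything in the second component beating everything
in the first. -/
def glue (b : UT m) (c : UT n) : UT (m + n + 1) :=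
  ⟨fun x y => if x < y then gfun E b c x y else 0, by
    intro x y
    refine ⟨fun h => ?_, fun h => if_neg h⟩
    dsimp only; rw [if_pos h]; exact gfun_mem E b c x y⟩

lemma bt_glue (b : UT m) (c : UT n) (x y : Fin (m + n + 1 + 1)) :
    bt (glue E b c) x y = gfun E b c x y := by
  rcases lt_trichotomy x y with hl | he | hl
  · rw [← apply_of_lt _ hl]; simp [glue, hl]
  · subst he
    rw [bt_self]
    obtain ⟨z, rfl⟩ : ∃ z, x = E z := ⟨E.symm x, (E.apply_symm_apply x).symm⟩
    rcases z with u | v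
    · rw [gfun_ll, bt_self]
    · rw [gfun_rr, bt_self]
  · rw [bt_rev _ (ne_of_gt hl).symm, ← apply_of_lt _ hl,
      gfun_rev E b c (ne_of_gt hl).symm]
    simp [glue, hl]

/-- the first component of a big tournament. -/
def split1 (a : UT (m + n + 1)) : UT m :=
  ⟨fun u u' => if u < u' then bt a (E (Sum.inl u)) (E (Sum.inl u')) else 0, by
    intro u u'
    refine ⟨fun h => ?_, fun h => if_neg h⟩
    dsimp only; rw [if_pos h]; exact bt_mem _ _ _⟩

/-- the second component of a big tournament. -/
def split2 (a : UT (m + n + 1)) : UT n :=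
  ⟨fun v v' => if v < v' then bt a (E (Sum.inr v)) (E (Sum.inr v')) else 0, by
    intro v v'
    refine ⟨fun h => ?_, fun h => if_neg h⟩
    dsimp only; rw [if_pos h]; exact bt_mem _ _ _⟩

lemma bt_split1 (a : UT (m + n + 1)) (u u' : Fin (m + 1)) :
    bt (split1 E a) u u' = bt a (E (Sum.inl u)) (E (Sum.inl u')) := by
  rcases lt_trichotomy u u' with hl | he | hl
  · rw [← apply_of_lt _ hl]; simp [split1, hl]
  · subst he; rw [bt_self, bt_self]
  · rw [bt_rev _ (ne_of_gt hl).symm, ← apply_of_lt _ hl,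
      bt_rev a (fun he => (ne_of_gt hl).symm (E.injective he |> Sum.inl.inj))]
    simp [split1, hl]

lemma bt_split2 (a : UT (m + n + 1)) (v v' : Fin (n + 1)) :
    bt (split2 E a) v v' = bt a (E (Sum.inr v)) (E (Sum.inr v')) := by
  rcases lt_trichotomy v v' with hl | he | hl
  · rw [← apply_of_lt _ hl]; simp [split2, hl]
  · subst he; rw [bt_self, bt_self]
  · rw [bt_rev _ (ne_of_gt hl).symm, ← apply_of_lt _ hl,
      bt_rev a (fun he => (ne_of_gt hl).symm (E.injective he |> Sum.inr.inj))]
    simp [split2, hl]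

lemma weight_decomp (a : UT (m + n + 1)) (x : Fin (m + n + 1 + 1)) :
    UTweight a x = (∑ u' : Fin (m + 1), bt a x (E (Sum.inl u'))) +
      ∑ v' : Fin (n + 1), bt a x (E (Sum.inr v')) := by
  rw [UTweight_eq_sum_bt, ← Equiv.sum_comp E (bt a x), Fintype.sum_sum_type]

variable (hkl : ∀ u, k (E (Sum.inl u)) = i u)
  (hkr : ∀ v, k (E (Sum.inr v)) = j v + m + 1)
  (hsum : ∑ v : Fin (n + 1), j v = ∑ v : Fin (n + 1), ((v : ℕ) : ℤ))

include hkr hsum in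
lemma forcing (a : UT (m + n + 1)) (ha : UTweight a = k) (v : Fin (n + 1))
    (u : Fin (m + 1)) : bt a (E (Sum.inr v)) (E (Sum.inl u)) = 1 := by
  have hinj : Function.Injective (fun v : Fin (n + 1) => E (Sum.inr v)) :=
    fun x y h => Sum.inr.inj (E.injective h)
  have hQ : (∑ v' : Fin (n + 1), ∑ v'' : Fin (n + 1),
      bt a (E (Sum.inr v')) (E (Sum.inr v''))) = ∑ v' : Fin (n + 1), ((v' : ℕ) : ℤ) := by
    apply mul_left_cancel₀ (two_ne_zero (α := ℤ))
    rw [sum_bt_pairs a _ hinj, two_mul_sum_fin]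
    simp only [Fintype.card_fin]
    push_cast
    ring
  have h1 : ∑ v' : Fin (n + 1), UTweight a (E (Sum.inr v')) =
      (∑ v' : Fin (n + 1), ∑ u' : Fin (m + 1), bt a (E (Sum.inr v')) (E (Sum.inl u'))) +
      ∑ v' : Fin (n + 1), ∑ v'' : Fin (n + 1), bt a (E (Sum.inr v')) (E (Sum.inr v'')) := by
    rw [Finset.sum_congr rfl (fun v' _ => weight_decomp E a (E (Sum.inr v'))),
      Finset.sum_add_distrib]
  have h2 : ∑ v' : Fin (n + 1), UTweight a (E (Sum.inr v')) =
      (∑ v' : Fin (n + 1), ((v' : ℕ) : ℤ)) + ((n : ℤ) + 1) * ((m : ℤ) + 1) := by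
    have hx : ∀ v' : Fin (n + 1), UTweight a (E (Sum.inr v')) = j v' + ((m : ℤ) + 1) := by
      intro v'
      rw [ha, hkr v']
      ring
    rw [Finset.sum_congr rfl (fun v' _ => hx v'), Finset.sum_add_distrib, hsum]
    simp [Finset.card_univ]
  have hP : (∑ v' : Fin (n + 1), ∑ u' : Fin (m + 1),
      bt a (E (Sum.inr v')) (E (Sum.inl u'))) = ((n : ℤ) + 1) * ((m : ℤ) + 1) := by
    linarith [h1, h2, hQ]
  have hzero : ∑ p : Fin (n + 1) × Fin (m + 1),
      (1 - bt a (E (Sum.inr p.1)) (E (Sum.inl p.2))) = 0 := by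
    rw [Fintype.sum_prod_type, Finset.sum_congr rfl
      (fun v' _ => Finset.sum_sub_distrib (s := Finset.univ)
        (f := fun _ => (1:ℤ)) (g := fun u' => bt a (E (Sum.inr v')) (E (Sum.inl u')))),
      Finset.sum_sub_distrib]
    simp only [Finset.sum_const, Finset.card_univ, Fintype.card_fin, nsmul_eq_mul, mul_one]
    rw [hP]
    push_cast
    ring
  have hterm := (Finset.sum_eq_zero_iff_of_nonneg (fun p _ => by
      have := bt_le_one a (E (Sum.inr p.1)) (E (Sum.inl p.2)); linarith)).1 hzero
      ⟨v, u⟩ (Finset.mem_univ _)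
  simp only at hterm
  linarith

include hkl hkr hsum in
lemma weight_split1 (a : UT (m + n + 1)) (ha : UTweight a = k) :
    UTweight (split1 E a) = i := by
  funext u
  rw [UTweight_eq_sum_bt,
    Finset.sum_congr rfl (fun u' _ => bt_split1 E a u u')]
  have hdec := weight_decomp E a (E (Sum.inl u))
  have hz : ∀ v' : Fin (n + 1), bt a (E (Sum.inl u)) (E (Sum.inr v')) = 0 := by
    intro v'
    have h1 := forcing E j k hkr hsum a ha v' u
    have hne : E (Sum.inr v') ≠ E (Sum.inl u) := fun he => by
      simpa using E.injective he
    rw [bt_rev a hne, h1]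
    norm_num
  rw [Finset.sum_congr rfl (fun v' _ => hz v'), Finset.sum_const_zero] at hdec
  have := hdec.symm
  rw [ha, hkl u] at hdec
  linarith [hdec]

omit hkl in
include hkr hsum in
lemma weight_split2 (a : UT (m + n + 1)) (ha : UTweight a = k) :
    UTweight (split2 E a) = j := by
  funext v
  rw [UTweight_eq_sum_bt,
    Finset.sum_congr rfl (fun v' _ => bt_split2 E a v v')]
  have hdec := weight_decomp E a (E (Sum.inr v))
  have hz : ∀ u' : Fin (m + 1), bt a (E (Sum.inr v)) (E (Sum.inl u')) = 1 :=
    fun u' => forcing E j k hkr hsum a ha v u'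
  rw [Finset.sum_congr rfl (fun u' _ => hz u'), Finset.sum_const] at hdec
  simp only [Finset.card_univ, Fintype.card_fin, nsmul_eq_mul, mul_one] at hdec
  rw [ha, hkr v] at hdec
  push_cast at hdec
  linarith [hdec]

lemma split1_glue (b : UT m) (c : UT n) : split1 E (glue E b c) = b :=
  UT_ext_bt fun u u' => by rw [bt_split1, bt_glue, gfun_ll]

lemma split2_glue (b : UT m) (c : UT n) : split2 E (glue E b c) = c :=
  UT_ext_bt fun v v' => by rw [bt_split2, bt_glue, gfun_rr]

include hkr hsum in
lemma glue_split (a : UT (m + n + 1)) (ha : UTweight a = k) :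
    glue E (split1 E a) (split2 E a) = a := by
  apply UT_ext_bt
  intro x y
  rw [bt_glue]
  obtain ⟨z, rfl⟩ : ∃ z, x = E z := ⟨E.symm x, (E.apply_symm_apply x).symm⟩
  obtain ⟨z', rfl⟩ : ∃ z', y = E z' := ⟨E.symm y, (E.apply_symm_apply y).symm⟩
  rcases z with u | v <;> rcases z' with u' | v'
  · rw [gfun_ll, bt_split1]
  · rw [gfun_lr]
    have h1 := forcing E j k hkr hsum a ha v' u
    have hne : E (Sum.inr v') ≠ E (Sum.inl u) := fun he => by simpa using E.injective he
    rw [bt_rev a hne, h1]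
    norm_num
  · rw [gfun_rl]
    exact (forcing E j k hkr hsum a ha v u').symm
  · rw [gfun_rr, bt_split2]

include hkl hkr in
lemma weight_glue (b : UT m) (c : UT n) (hb : UTweight b = i) (hc : UTweight c = j) :
    UTweight (glue E b c) = k := by
  funext x
  obtain ⟨z, rfl⟩ : ∃ z, x = E z := ⟨E.symm x, (E.apply_symm_apply x).symm⟩
  rw [weight_decomp E]
  rcases z with u | v
  · rw [Finset.sum_congr rfl (fun u' _ => bt_glue E b c _ _),
      Finset.sum_congr rfl (fun v' _ => bt_glue E b c _ _)]
    rw [Finset.sum_congr rfl (fun u' _ => gfun_ll E b c u u'),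
      Finset.sum_congr rfl (fun v' _ => gfun_lr E b c u v')]
    rw [Finset.sum_const_zero, add_zero, hkl u, ← hb, UTweight_eq_sum_bt]
  · rw [Finset.sum_congr rfl (fun u' _ => bt_glue E b c _ _),
      Finset.sum_congr rfl (fun v' _ => bt_glue E b c _ _)]
    rw [Finset.sum_congr rfl (fun u' _ => gfun_rl E b c v u'),
      Finset.sum_congr rfl (fun v' _ => gfun_rr E b c v v')]
    rw [Finset.sum_const, hkr v, ← hc, UTweight_eq_sum_bt]
    simp only [Finset.card_univ, Fintype.card_fin, nsmul_eq_mul, mul_one]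
    push_cast
    ring

include hkr hsum in
lemma cross_zero (a : UT (m + n + 1)) (ha : UTweight a = k) (u : Fin (m + 1))
    (v : Fin (n + 1)) : bt a (E (Sum.inl u)) (E (Sum.inr v)) = 0 := by
  have h1 := forcing E j k hkr hsum a ha v u
  have hne : E (Sum.inr v) ≠ E (Sum.inl u) := fun he => by simpa using E.injective he
  rw [bt_rev a hne, h1]
  norm_num

include hkr hsum in
lemma cross_ne_one (a : UT (m + n + 1)) (ha : UTweight a = k) (u : Fin (m + 1))
    (v : Fin (n + 1)) : bt a (E (Sum.inl u)) (E (Sum.inr v)) ≠ 1 := by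
  rw [cross_zero E j k hkr hsum a ha u v]
  norm_num

include hkr hsum in
lemma adj_transfer (a b : UT (m + n + 1)) (ha : UTweight a = k) (hb : UTweight b = k) :
    UTAdj a b ↔ ((split2 E a = split2 E b ∧ UTAdj (split1 E a) (split1 E b)) ∨
      (split1 E a = split1 E b ∧ UTAdj (split2 E a) (split2 E b))) := by
  rw [adj_iff_adj' a b, adj_iff_adj' (split1 E a) (split1 E b),
    adj_iff_adj' (split2 E a) (split2 E b)]
  constructor
  · rintro ⟨P, Q, R, hPQ, hQR, hRP, hcyc, hagr⟩
    obtain ⟨zP, rfl⟩ : ∃ z, P = E z := ⟨E.symm P, (E.apply_symm_apply P).symm⟩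
    obtain ⟨zQ, rfl⟩ : ∃ z, Q = E z := ⟨E.symm Q, (E.apply_symm_apply Q).symm⟩
    obtain ⟨zR, rfl⟩ : ∃ z, R = E z := ⟨E.symm R, (E.apply_symm_apply R).symm⟩
    obtain ⟨c1, c2, c3, c4, c5, c6⟩ := hcyc
    rcases zP with p | p <;> rcases zQ with q | q <;> rcases zR with r | r
    · -- all left
      left
      constructor
      · apply UT_ext_bt
        intro v v'
        rw [bt_split2, bt_split2]
        apply hagr
        left
        simp [E.injective.eq_iff]
      · refine ⟨p, q, r, fun h => hPQ (by rw [h]), fun h => hQR (by rw [h]),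
          fun h => hRP (by rw [h]), ⟨?_, ?_, ?_, ?_, ?_, ?_⟩, ?_⟩
        · rw [bt_split1]; exact c1
        · rw [bt_split1]; exact c2
        · rw [bt_split1]; exact c3
        · rw [bt_split1]; exact c4
        · rw [bt_split1]; exact c5
        · rw [bt_split1]; exact c6
        · intro s t hst
          rw [bt_split1, bt_split1]
          apply hagr
          refine hst.imp ?_ ?_ <;>
          · intro h hmem
            apply h
            simp only [Finset.mem_insert, Finset.mem_singleton,
              E.injective.eq_iff, Sum.inl.injEq] at hmem ⊢
            exact hmem
    · exact absurd c2 (cross_ne_one E j k hkr hsum a ha q r)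
    · exact absurd c1 (cross_ne_one E j k hkr hsum a ha p q)
    · exact absurd c1 (cross_ne_one E j k hkr hsum a ha p q)
    · exact absurd c3 (cross_ne_one E j k hkr hsum a ha r p)
    · exact absurd c2 (cross_ne_one E j k hkr hsum a ha q r)
    · exact absurd c3 (cross_ne_one E j k hkr hsum a ha r p)
    · -- all right
      right
      constructor
      · apply UT_ext_bt
        intro u u'
        rw [bt_split1, bt_split1]
        apply hagr
        left
        simp [E.injective.eq_iff]
      · refine ⟨p, q, r, fun h => hPQ (by rw [h]), fun h => hQR (by rw [h]),
          fun h => hRP (by rw [h]), ⟨?_, ?_, ?_, ?_, ?_, ?_⟩, ?_⟩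
        · rw [bt_split2]; exact c1
        · rw [bt_split2]; exact c2
        · rw [bt_split2]; exact c3
        · rw [bt_split2]; exact c4
        · rw [bt_split2]; exact c5
        · rw [bt_split2]; exact c6
        · intro s t hst
          rw [bt_split2, bt_split2]
          apply hagr
          refine hst.imp ?_ ?_ <;>
          · intro h hmem
            apply h
            simp only [Finset.mem_insert, Finset.mem_singleton,
              E.injective.eq_iff, Sum.inr.injEq] at hmem ⊢
            exact hmem
  · rintro (⟨h2eq, p, q, r, hpq, hqr, hrp, ⟨c1, c2, c3, c4, c5, c6⟩, hagr⟩ |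
      ⟨h1eq, p, q, r, hpq, hqr, hrp, ⟨c1, c2, c3, c4, c5, c6⟩, hagr⟩)
    · refine ⟨E (Sum.inl p), E (Sum.inl q), E (Sum.inl r),
        fun h => hpq (by simpa using E.injective h),
        fun h => hqr (by simpa using E.injective h),
        fun h => hrp (by simpa using E.injective h),
        ⟨?_, ?_, ?_, ?_, ?_, ?_⟩, ?_⟩
      · rw [← bt_split1 E a]; exact c1
      · rw [← bt_split1 E a]; exact c2
      · rw [← bt_split1 E a]; exact c3
      · rw [← bt_split1 E b]; exact c4
      · rw [← bt_split1 E b]; exact c5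
      · rw [← bt_split1 E b]; exact c6
      · intro S T hST
        obtain ⟨z, rfl⟩ : ∃ z, S = E z := ⟨E.symm S, (E.apply_symm_apply S).symm⟩
        obtain ⟨z', rfl⟩ : ∃ z', T = E z' := ⟨E.symm T, (E.apply_symm_apply T).symm⟩
        rcases z with s | s <;> rcases z' with t | t
        · rw [← bt_split1 E a, ← bt_split1 E b]
          apply hagr
          refine hST.imp ?_ ?_ <;>
          · intro h hmem
            apply h
            simp only [Finset.mem_insert, Finset.mem_singleton] at hmem ⊢
            rcases hmem with rfl | rfl | rfl <;> tauto
        · rw [cross_zero E j k hkr hsum a ha, cross_zero E j k hkr hsum b hb]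
        · rw [forcing E j k hkr hsum a ha, forcing E j k hkr hsum b hb]
        · rw [← bt_split2 E a, ← bt_split2 E b, h2eq]
    · refine ⟨E (Sum.inr p), E (Sum.inr q), E (Sum.inr r),
        fun h => hpq (by simpa using E.injective h),
        fun h => hqr (by simpa using E.injective h),
        fun h => hrp (by simpa using E.injective h),
        ⟨?_, ?_, ?_, ?_, ?_, ?_⟩, ?_⟩
      · rw [← bt_split2 E a]; exact c1
      · rw [← bt_split2 E a]; exact c2
      · rw [← bt_split2 E a]; exact c3
      · rw [← bt_split2 E b]; exact c4
      · rw [← bt_split2 E b]; exact c5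
      · rw [← bt_split2 E b]; exact c6
      · intro S T hST
        obtain ⟨z, rfl⟩ : ∃ z, S = E z := ⟨E.symm S, (E.apply_symm_apply S).symm⟩
        obtain ⟨z', rfl⟩ : ∃ z', T = E z' := ⟨E.symm T, (E.apply_symm_apply T).symm⟩
        rcases z with s | s <;> rcases z' with t | t
        · rw [← bt_split1 E a, ← bt_split1 E b, h1eq]
        · rw [cross_zero E j k hkr hsum a ha, cross_zero E j k hkr hsum b hb]
        · rw [forcing E j k hkr hsum a ha, forcing E j k hkr hsum b hb]
        · rw [← bt_split2 E a, ← bt_split2 E b]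
          apply hagr
          refine hST.imp ?_ ?_ <;>
          · intro h hmem
            apply h
            simp only [Finset.mem_insert, Finset.mem_singleton] at hmem ⊢
            rcases hmem with rfl | rfl | rfl <;> tauto

end Core

end WSP

open WSP in
/-- If the weight `k` of `G_{m+n+1}` is a permutation of
`(i_0, …, i_m, j_0 + m + 1, …, j_n + m + 1)` with `(i_0,…,i_m) ∈ ω_m` and
`(j_0,…,j_n) ∈ ω_n`, then the weight subgraph `G(k)` is isomorphic to the box product
of the weight subgraphs `G(i)` of `G_m` and `G(j)` of `G_n`; in particular its number
of vertices is the product of the two numbers of vertices. -/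
theorem weight_subgraph_of_reducible_weight_is_product
    (m n : ℕ) (i : Fin (m + 1) → ℤ) (j : Fin (n + 1) → ℤ)
    (hi : InOmega i) (hj : InOmega j)
    (k : Fin (m + n + 1 + 1) → ℤ) (σ : Equiv.Perm (Fin (m + n + 1 + 1)))
    (hk : ∀ x : Fin (m + n + 1 + 1),
      k x = Fin.append i (fun y : Fin (n + 1) => j y + m + 1)
        (Fin.cast (by omega) (σ x))) :
    (∃ φ : {a : UT (m + n + 1) // UTweight a = k} ≃
        ({x : UT m // UTweight x = i} × {y : UT n // UTweight y = j}),
      ∀ a b : {a : UT (m + n + 1) // UTweight a = k},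
        UTAdj a.1 b.1 ↔
          (((φ a).2 = (φ b).2 ∧ UTAdj (φ a).1.1 (φ b).1.1) ∨
            ((φ a).1 = (φ b).1 ∧ UTAdj (φ a).2.1 (φ b).2.1))) ∧
    Nat.card {a : UT (m + n + 1) // UTweight a = k} =
      Nat.card {x : UT m // UTweight x = i} * Nat.card {y : UT n // UTweight y = j} := by
  have hc : m + 1 + (n + 1) = m + n + 1 + 1 := by omega
  set E : Fin (m + 1) ⊕ Fin (n + 1) ≃ Fin (m + n + 1 + 1) :=
    (finSumFinEquiv.trans (finCongr hc)).trans σ.symm with hE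
  have hkl : ∀ u, k (E (Sum.inl u)) = i u := by
    intro u
    rw [hk]
    have h1 : σ (E (Sum.inl u)) = finCongr hc (finSumFinEquiv (Sum.inl u)) := by
      simp [hE]
    rw [h1]
    have h2 : Fin.cast (by omega : m + n + 1 + 1 = m + 1 + (n + 1))
        (finCongr hc (finSumFinEquiv (Sum.inl u))) = Fin.castAdd (n + 1) u := by
      ext
      simp
    rw [h2, Fin.append_left]
  have hkr : ∀ v, k (E (Sum.inr v)) = j v + m + 1 := by
    intro v
    rw [hk]
    have h1 : σ (E (Sum.inr v)) = finCongr hc (finSumFinEquiv (Sum.inr v)) := by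
      simp [hE]
    rw [h1]
    have h2 : Fin.cast (by omega : m + n + 1 + 1 = m + 1 + (n + 1))
        (finCongr hc (finSumFinEquiv (Sum.inr v))) = Fin.natAdd (m + 1) v := by
      ext
      simp
    rw [h2, Fin.append_right]
  have hsum : ∑ v : Fin (n + 1), j v = ∑ v : Fin (n + 1), ((v : ℕ) : ℤ) := hj.1
  let φ : {a : UT (m + n + 1) // UTweight a = k} ≃
      ({x : UT m // UTweight x = i} × {y : UT n // UTweight y = j}) :=
    { toFun := fun a => (⟨split1 E a.1, weight_split1 E i j k hkl hkr hsum a.1 a.2⟩,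
        ⟨split2 E a.1, weight_split2 E j k hkr hsum a.1 a.2⟩)
      invFun := fun p => ⟨glue E p.1.1 p.2.1,
        weight_glue E i j k hkl hkr p.1.1 p.2.1 p.1.2 p.2.2⟩
      left_inv := fun a => Subtype.ext (glue_split E j k hkr hsum a.1 a.2)
      right_inv := fun p => Prod.ext (Subtype.ext (split1_glue E p.1.1 p.2.1))
        (Subtype.ext (split2_glue E p.1.1 p.2.1)) }
  refine ⟨⟨φ, ?_⟩, ?_⟩
  · intro a b
    rw [adj_transfer E j k hkr hsum a.1 b.1 a.2 b.2]
    simp only [φ, Equiv.coe_fn_mk, Subtype.ext_iff]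
  · rw [Nat.card_congr φ, Nat.card_prod]
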